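/- arXiv:1502.07491 — 3 statements merged into one kernel-verified Lean document; each statement's English description precedes it below -/
import Mathlib

section
/- Define a sequence A : ℕ → ℝ by A₁ = φ/2 and A_{k+1} = ((2k+1)/(2k+2))·(φ − k(4k+1)(4k+3)(4k+4))·A_k, where φ = n(4n+1)(4n+3)(4n+4) for a fixed natural number n ≥ 1. Then A_k > 0 for all 1 ≤ k ≤ n, and A_k = 0 for all k ≥ n+1. -/
theorem stmt_4 (n : ℕ) (hn : 1 ≤ n) (φ : ℝ)
    (hφ : φ = n * (4 * n + 1) * (4 * n + 3) * (4 * n + 4))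
    (A : ℕ → ℝ) (hA1 : A 1 = φ / 2)
    (hrec : ∀ k : ℕ, 1 ≤ k →
      A (k + 1) = ((2 * k + 1) / (2 * k + 2))
        * (φ - k * (4 * k + 1) * (4 * k + 3) * (4 * k + 4)) * A k) :
    (∀ k : ℕ, 1 ≤ k → k ≤ n → 0 < A k) ∧ (∀ k : ℕ, n + 1 ≤ k → A k = 0) := by
  have hpos : ∀ k : ℕ, 1 ≤ k → k ≤ n → 0 < A k := by
    intro k
    induction k with
    | zero => omega
    | succ m ih =>
      intro _ hle
      rcases Nat.eq_zero_or_pos m with hm | hm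
      · subst hm
        rw [hA1, hφ]
        have h1 : (1:ℝ) ≤ (n:ℝ) := by exact_mod_cast hn
        positivity
      · have hAm := ih hm (by omega)
        rw [hrec m hm]
        have hmn : (m:ℝ) + 1 ≤ (n:ℝ) := by exact_mod_cast (by omega : m + 1 ≤ n)
        have hm0 : (0:ℝ) ≤ (m:ℝ) := Nat.cast_nonneg m
        have hgap : (m:ℝ) * (4 * m + 1) * (4 * m + 3) * (4 * m + 4) <
            (n:ℝ) * (4 * n + 1) * (4 * n + 3) * (4 * n + 4) := by
          nlinarith [sq_nonneg ((n:ℝ) - m), sq_nonneg ((n:ℝ) + m), mul_nonneg hm0 hm0,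
            mul_nonneg (mul_nonneg hm0 hm0) hm0]
        have hfrac : (0:ℝ) < (2 * m + 1) / (2 * m + 2) := by positivity
        have : (0:ℝ) < φ - m * (4 * m + 1) * (4 * m + 3) * (4 * m + 4) := by
          rw [hφ]; linarith
        positivity
  refine ⟨hpos, ?_⟩
  have hz : A (n + 1) = 0 := by
    rw [hrec n hn, hφ]
    ring
  intro k hk
  induction k with
  | zero => omega
  | succ m ih =>
    rcases Nat.lt_or_ge m (n + 1) with h | h
    · have : m = n := by omega
      subst this; exact hz
    · have hm1 : 1 ≤ m := by omega
      rw [hrec m hm1, ih h, mul_zero]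
end

section
/- For every natural number n ≥ 1, the four complex numbers σ₁ = (1−4n−√(1−16n−16n²))/2, σ₂ = (1−4n+√(1−16n−16n²))/2, σ₃ = (5+4n−√(1−16n−16n²))/2, σ₄ = (5+4n+√(1−16n−16n²))/2 are exactly the roots of σ(σ−1)(σ−2)(σ−3) + n(4n+1)(4n+3)(4n+4) = 0, where √ denotes a fixed complex square root of 1−16n−16n². -/
theorem stmt_9 (n : ℕ) (hn : 1 ≤ n) (s : ℂ)
    (hs : s ^ 2 = 1 - 16 * n - 16 * n ^ 2)
    (σ₁ σ₂ σ₃ σ₄ : ℂ)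
    (h1 : σ₁ = (1 - 4 * n - s) / 2) (h2 : σ₂ = (1 - 4 * n + s) / 2)
    (h3 : σ₃ = (5 + 4 * n - s) / 2) (h4 : σ₄ = (5 + 4 * n + s) / 2) :
    ∀ σ : ℂ,
      σ * (σ - 1) * (σ - 2) * (σ - 3)
          + n * (4 * n + 1) * (4 * n + 3) * (4 * n + 4) = 0
        ↔ σ = σ₁ ∨ σ = σ₂ ∨ σ = σ₃ ∨ σ = σ₄ := by
  intro σ
  have key : σ * (σ - 1) * (σ - 2) * (σ - 3)
      + n * (4 * n + 1) * (4 * n + 3) * (4 * n + 4)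
      = (σ - σ₁) * (σ - σ₂) * ((σ - σ₃) * (σ - σ₄)) := by
    subst h1 h2 h3 h4
    linear_combination ((8 * σ ^ 2 - 24 * σ + 48 * (n:ℂ) ^ 2 + 48 * n + 25 - s ^ 2) / 16) * hs
  rw [key, mul_eq_zero, mul_eq_zero, mul_eq_zero, sub_eq_zero, sub_eq_zero,
    sub_eq_zero, sub_eq_zero, or_assoc]
end

section
/- Let c, φ, ψ ∈ ℝ, k ≥ 1 a natural number, l ∈ {1,2,3}, and on ℝ \ {0} define u(x) = c·x⁻⁴ + φ·x⁻ˡ and f(x) = A·x^{−4k} + B·x^{−4k+4−l} with A, B ∈ ℝ. Then the coefficient of x^{−4k−l−1} in u·f' + u'·f/2 − f⁽⁵⁾/4 equals −((8k+l)/2)·φ·A − ((4k−2+l)/4)·(4c − (4k−4+l)(4k−3+l)(4k−1+l)(4k+l))·B. -/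
open Filter in
theorem aux_iter (A B : ℝ) (m₁ m₂ : ℤ) (g : ℝ → ℝ)
    (hg : ∀ x : ℝ, x ≠ 0 → g x = A * x ^ m₁ + B * x ^ m₂) (n : ℕ) :
    ∀ x : ℝ, x ≠ 0 → deriv^[n] g x =
      (A * ∏ i ∈ Finset.range n, ((m₁ : ℝ) - i)) * x ^ (m₁ - n) +
      (B * ∏ i ∈ Finset.range n, ((m₂ : ℝ) - i)) * x ^ (m₂ - n) := by
  induction n with
  | zero => intro x hx; simpa using hg x hx
  | succ n ih =>
    intro x hx
    rw [Function.iterate_succ_apply']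
    have heq : deriv^[n] g =ᶠ[nhds x] fun y =>
        (A * ∏ i ∈ Finset.range n, ((m₁ : ℝ) - i)) * y ^ (m₁ - n) +
        (B * ∏ i ∈ Finset.range n, ((m₂ : ℝ) - i)) * y ^ (m₂ - n) := by
      filter_upwards [IsOpen.mem_nhds isOpen_compl_singleton hx] with y hy
      exact ih y hy
    rw [heq.deriv_eq]
    have h1 : HasDerivAt (fun y : ℝ =>
        (A * ∏ i ∈ Finset.range n, ((m₁ : ℝ) - i)) * y ^ (m₁ - n) +
        (B * ∏ i ∈ Finset.range n, ((m₂ : ℝ) - i)) * y ^ (m₂ - n))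
        ((A * ∏ i ∈ Finset.range n, ((m₁ : ℝ) - i)) * (((m₁ - n : ℤ) : ℝ) * x ^ (m₁ - n - 1)) +
         (B * ∏ i ∈ Finset.range n, ((m₂ : ℝ) - i)) * (((m₂ - n : ℤ) : ℝ) * x ^ (m₂ - n - 1))) x :=
      ((hasDerivAt_zpow (m₁ - n) x (Or.inl hx)).const_mul _).add
        ((hasDerivAt_zpow (m₂ - n) x (Or.inl hx)).const_mul _)
    rw [h1.deriv, Finset.prod_range_succ, Finset.prod_range_succ]
    have e1 : m₁ - (n : ℤ) - 1 = m₁ - ((n : ℕ) + 1 : ℕ) := by push_cast; ring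
    have e2 : m₂ - (n : ℤ) - 1 = m₂ - ((n : ℕ) + 1 : ℕ) := by push_cast; ring
    rw [e1, e2]
    push_cast
    ring

theorem stmt_18 (c φ A B : ℝ) (k : ℕ) (hk : 1 ≤ k)
    (l : ℕ) (hl : l ∈ ({1, 2, 3} : Set ℕ))
    (u f : ℝ → ℝ)
    (hu : ∀ x : ℝ, x ≠ 0 → u x = c * x ^ (-4 : ℤ) + φ * x ^ (-(l : ℤ)))
    (hf : ∀ x : ℝ, x ≠ 0 →
      f x = A * x ^ (-(4 * (k : ℤ))) + B * x ^ (-(4 * (k : ℤ)) + 4 - (l : ℤ))) :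
    ∃ D E : ℝ, ∀ x : ℝ, x ≠ 0 →
      u x * deriv f x + deriv u x * f x / 2 - deriv^[5] f x / 4
        = D * x ^ (-(4 * (k : ℤ)) - 5)
          + (-((8 * k + l) / 2) * φ * A
              - ((4 * k - 2 + l) / 4)
                * (4 * c - (4 * (k : ℝ) - 4 + l) * (4 * k - 3 + l)
                    * (4 * k - 1 + l) * (4 * k + l)) * B)
            * x ^ (-(4 * (k : ℤ)) - (l : ℤ) - 1)
          + E * x ^ (-(4 * (k : ℤ)) + 3 - 2 * (l : ℤ)) := by
  have hF := aux_iter A B (-(4 * (k : ℤ))) (-(4 * (k : ℤ)) + 4 - l) f hf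
  have hU := aux_iter c φ (-4) (-(l : ℤ)) u hu
  refine ⟨c * (-(4 * (k : ℝ))) * A + (-4) * c * A / 2
      - A * ((-(4 * (k : ℝ))) * (-(4 * k) - 1) * (-(4 * k) - 2) * (-(4 * k) - 3)
          * (-(4 * k) - 4)) / 4,
    φ * B * (-(4 * (k : ℝ)) + 4 - l) + (-(l : ℝ)) * φ * B / 2, ?_⟩
  intro x hx
  have hdf : deriv f x =
      (A * (-(4 * (k : ℝ)))) * x ^ (-(4 * (k : ℤ)) - 1)
      + (B * (-(4 * (k : ℝ)) + 4 - l)) * x ^ (-(4 * (k : ℤ)) + 4 - (l : ℤ) - 1) := by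
    have := hF 1 x hx
    simpa [Finset.prod_range_succ] using this
  have hdu : deriv u x =
      (c * (-4)) * x ^ (-4 - 1 : ℤ) + (φ * (-(l : ℝ))) * x ^ (-(l : ℤ) - 1) := by
    have := hU 1 x hx
    simpa [Finset.prod_range_succ] using this
  have hd5 : deriv^[5] f x =
      (A * ((-(4 * (k : ℝ))) * (-(4 * k) - 1) * (-(4 * k) - 2) * (-(4 * k) - 3)
          * (-(4 * k) - 4))) * x ^ (-(4 * (k : ℤ)) - 5)
      + (B * ((-(4 * (k : ℝ)) + 4 - l) * (-(4 * k) + 4 - l - 1) * (-(4 * k) + 4 - l - 2)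
          * (-(4 * k) + 4 - l - 3) * (-(4 * k) + 4 - l - 4))) * x ^ (-(4 * (k : ℤ)) + 4 - (l : ℤ) - 5) := by
    have := hF 5 x hx
    simpa [Finset.prod_range_succ] using this
  rw [hu x hx, hf x hx, hdf, hdu, hd5]
  -- exponent rewrites into s := x ^ (-(4k)), t := x ^ (-l), and powers of x
  have h1 : x ^ (-(4 * (k : ℤ)) - 1) = x ^ (-(4 * (k : ℤ))) / x := by
    rw [zpow_sub₀ hx, zpow_one]
  have h2 : x ^ (-(4 * (k : ℤ)) + 4 - (l : ℤ) - 1) =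
      x ^ (-(4 * (k : ℤ))) * x ^ (-(l : ℤ)) * x ^ (3 : ℕ) := by
    rw [← zpow_natCast x 3, ← zpow_add₀ hx, ← zpow_add₀ hx]; norm_num; ring
  have h3 : x ^ (-(4 * (k : ℤ)) + 4 - (l : ℤ)) =
      x ^ (-(4 * (k : ℤ))) * x ^ (-(l : ℤ)) * x ^ (4 : ℕ) := by
    rw [← zpow_natCast x 4, ← zpow_add₀ hx, ← zpow_add₀ hx]; norm_num; ring
  have h5 : x ^ (-(4 * (k : ℤ)) + 4 - (l : ℤ) - 5) =
      x ^ (-(4 * (k : ℤ))) * x ^ (-(l : ℤ)) / x := by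
    rw [show -(4 * (k : ℤ)) + 4 - (l : ℤ) - 5 = (-(4 * (k : ℤ)) + -(l : ℤ)) - 1 by ring,
      zpow_sub₀ hx, zpow_add₀ hx, zpow_one]
  have h6 : x ^ (-(l : ℤ) - 1) = x ^ (-(l : ℤ)) / x := by
    rw [zpow_sub₀ hx, zpow_one]
  have h4 : x ^ (-(4 * (k : ℤ)) - 5) = x ^ (-(4 * (k : ℤ))) / x ^ (5 : ℕ) := by
    rw [zpow_sub₀ hx, ← zpow_natCast x 5]; norm_num
  have h7 : x ^ (-4 : ℤ) = 1 / x ^ (4 : ℕ) := by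
    rw [zpow_neg, ← zpow_natCast x 4]; norm_num
  have h8 : x ^ (-4 - 1 : ℤ) = 1 / x ^ (5 : ℕ) := by
    rw [show (-4 - 1 : ℤ) = -(5 : ℤ) by norm_num, zpow_neg, ← zpow_natCast x 5]; norm_num
  have h9 : x ^ (-(4 * (k : ℤ)) - (l : ℤ) - 1) =
      x ^ (-(4 * (k : ℤ))) * x ^ (-(l : ℤ)) / x := by
    rw [show -(4 * (k : ℤ)) - (l : ℤ) - 1 = (-(4 * (k : ℤ)) + -(l : ℤ)) - 1 by ring,
      zpow_sub₀ hx, zpow_add₀ hx, zpow_one]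
  have h10 : x ^ (-(4 * (k : ℤ)) + 3 - 2 * (l : ℤ)) =
      x ^ (-(4 * (k : ℤ))) * (x ^ (-(l : ℤ)) * x ^ (-(l : ℤ))) * x ^ (3 : ℕ) := by
    rw [← zpow_natCast x 3, ← zpow_add₀ hx, ← zpow_add₀ hx, ← zpow_add₀ hx]; norm_num; ring
  rw [h1, h2, h3, h4, h5, h6, h7, h8, h9, h10]
  field_simp
  ring
end
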